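/- Let q = 2^h with h ≥ 2, and let a₁₁, a₁₃, a₃₃ ∈ F_q be all nonzero. Let C = {(x, y) ∈ F_q² : a₁₁x² + a₁₃x + a₃₃ = 0} and Δ = {(x, a·x²) : x ∈ F_q^*, Tr(a) = 0}. Then |Δ ∩ C| = q if Tr(a₁₁a₃₃/a₁₃²) = 0, and |Δ ∩ C| = 0 if Tr(a₁₁a₃₃/a₁₃²) = 1. -/

import Mathlib

private lemma aux_char (F : Type*) [Field F] [Algebra (ZMod 2) F] : CharP F 2 :=
  charP_of_injective_ringHom (algebraMap (ZMod 2) F).injective 2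

private lemma aux_tr_sq {F : Type*} [Field F] [Fintype F] [Algebra (ZMod 2) F] (t : F) :
    Algebra.trace (ZMod 2) F (t^2) = Algebra.trace (ZMod 2) F t := by
  haveI := aux_char F
  haveI : Fact (Nat.Prime 2) := ⟨Nat.prime_two⟩
  let e : F ≃ₐ[ZMod 2] F :=
    { frobeniusEquiv F 2 with
      commutes' := fun c => by
        show frobenius F 2 _ = _
        rw [frobenius_def, ← map_pow]
        congr 1
        exact ZMod.pow_card c }
  have := Algebra.trace_eq_of_algEquiv e t
  simpa [e, frobeniusEquiv_def, frobenius_def] using this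

private lemma aux_ker_card {F : Type*} [Field F] [Fintype F] [Algebra (ZMod 2) F]
    {h : ℕ} (hh : 1 ≤ h) (hcard : Fintype.card F = 2 ^ h) :
    Nat.card {a : F | Algebra.trace (ZMod 2) F a = 0} = 2 ^ (h - 1) := by
  haveI := aux_char F
  set f := (Algebra.trace (ZMod 2) F).toAddMonoidHom with hf
  have hsurj : Function.Surjective f := Algebra.trace_surjective (ZMod 2) F
  have h1 : Nat.card (F ⧸ f.ker) = 2 := by
    rw [Nat.card_congr (QuotientAddGroup.quotientKerEquivOfSurjective f hsurj).toEquiv]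
    simp [Nat.card_eq_fintype_card]
  have h2 : Nat.card F = Nat.card (F ⧸ f.ker) * Nat.card f.ker :=
    AddSubgroup.card_eq_card_quotient_mul_card_addSubgroup f.ker
  have h3 : Nat.card F = 2 ^ h := by rw [Nat.card_eq_fintype_card, hcard]
  have h4 : (2:ℕ) ^ h = 2 * Nat.card f.ker := by rw [← h3, h2, h1]
  have hk : Nat.card f.ker = 2 ^ (h-1) := by
    have : 2 * 2 ^ (h-1) = 2 * Nat.card f.ker := by
      rw [← h4, ← pow_succ']
      congr 1; omega
    omega
  convert hk using 2; rfl

private lemma aux_AS {F : Type*} [Field F] [Fintype F] [Algebra (ZMod 2) F]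
    {h : ℕ} (hh : 1 ≤ h) (hcard : Fintype.card F = 2 ^ h) (c : F)
    (hc : Algebra.trace (ZMod 2) F c = 0) : ∃ t : F, t^2 + t = c := by
  haveI := aux_char F
  have h2 : (2:F) = 0 := CharTwo.two_eq_zero
  classical
  let φ : F →+ F :=
    { toFun := fun t => t^2 + t
      map_zero' := by ring
      map_add' := fun a b => by
        show (a+b)^2 + (a+b) = (a^2+a) + (b^2+b)
        rw [add_pow_char]
        ring }
  have hker : (φ.ker : Set F) = {0, 1} := by
    ext t
    simp only [AddMonoidHom.mem_ker, Set.mem_insert_iff, Set.mem_singleton_iff]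
    show t^2 + t = 0 ↔ _
    constructor
    · intro ht
      have : t * (t + 1) = 0 := by ring_nf; linear_combination ht
      rcases mul_eq_zero.mp this with h' | h'
      · exact Or.inl h'
      · right; linear_combination h' - h2
    · rintro (rfl | rfl)
      · ring
      · linear_combination h2
  have hker2 : Nat.card φ.ker = 2 := by
    have : Nat.card φ.ker = Nat.card ({0,1} : Set F) := Nat.card_congr (Equiv.setCongr hker)
    rw [this, Nat.card_coe_set_eq, Set.ncard_pair (one_ne_zero (α := F)).symm]
  have hcardF : Nat.card F = 2 ^ h := by rw [Nat.card_eq_fintype_card, hcard]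
  have hiso : Nat.card F = Nat.card (F ⧸ φ.ker) * Nat.card φ.ker :=
    AddSubgroup.card_eq_card_quotient_mul_card_addSubgroup φ.ker
  have hq : Nat.card (F ⧸ φ.ker) = Nat.card φ.range :=
    Nat.card_congr (QuotientAddGroup.quotientKerEquivRange φ).toEquiv
  have hrange : Nat.card φ.range = 2 ^ (h - 1) := by
    rw [← hq]
    have e1 : 2 ^ h = Nat.card (F ⧸ φ.ker) * 2 := by rw [← hcardF, hiso, hker2]
    have h2h : 2 ^ h = 2 ^ (h-1) * 2 := by
      rw [← pow_succ]; congr 1; omega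
    omega
  have hsub : (φ.range : Set F) ⊆ {a : F | Algebra.trace (ZMod 2) F a = 0} := by
    rintro _ ⟨t, rfl⟩
    show Algebra.trace (ZMod 2) F (t^2 + t) = 0
    rw [map_add, aux_tr_sq]
    exact CharTwo.add_self_eq_zero _
  have hr' : ((φ.range : Set F)).ncard = 2 ^ (h-1) := by
    rw [← Nat.card_coe_set_eq]; exact hrange
  have hk' : ({a : F | Algebra.trace (ZMod 2) F a = 0}).ncard ≤ 2 ^ (h-1) := by
    rw [← Nat.card_coe_set_eq, aux_ker_card hh hcard]
  have heq : (φ.range : Set F) = {a : F | Algebra.trace (ZMod 2) F a = 0} :=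
    Set.eq_of_subset_of_ncard_le hsub (hr' ▸ hk') (Set.toFinite _)
  have : c ∈ (φ.range : Set F) := heq ▸ hc
  obtain ⟨t, ht⟩ := this
  exact ⟨t, ht⟩

theorem stmt7 {F : Type*} [Field F] [Fintype F] [Algebra (ZMod 2) F]
    {h : ℕ} (hh : 2 ≤ h) (hcard : Fintype.card F = 2 ^ h)
    (a11 a13 a33 : F) (h11 : a11 ≠ 0) (h13 : a13 ≠ 0) (h33 : a33 ≠ 0) :
    (Algebra.trace (ZMod 2) F (a11 * a33 / a13 ^ 2) = 0 →
      Set.ncard ({p : F × F | ∃ x a : F, x ≠ 0 ∧ Algebra.trace (ZMod 2) F a = 0 ∧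
          p = (x, a * x ^ 2)} ∩
        {p : F × F | a11 * p.1 ^ 2 + a13 * p.1 + a33 = 0}) = 2 ^ h) ∧
    (Algebra.trace (ZMod 2) F (a11 * a33 / a13 ^ 2) = 1 →
      Set.ncard ({p : F × F | ∃ x a : F, x ≠ 0 ∧ Algebra.trace (ZMod 2) F a = 0 ∧
          p = (x, a * x ^ 2)} ∩
        {p : F × F | a11 * p.1 ^ 2 + a13 * p.1 + a33 = 0}) = 0) := by
  haveI := aux_char F
  have h2F : (2:F) = 0 := CharTwo.two_eq_zero
  constructor
  · -- trace zero case
    intro hc0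
    obtain ⟨t, ht⟩ := aux_AS (by omega) hcard _ hc0
    set x₁ := a13 * t / a11 with hx₁
    set x₂ := a13 * (t+1) / a11 with hx₂
    have hx12 : x₁ ≠ x₂ := by
      intro hEq
      rw [hx₁, hx₂, div_eq_div_iff h11 h11] at hEq
      have : a13 * a11 = 0 := by linear_combination -hEq
      exact (mul_ne_zero h13 h11) this
    have hfac : ∀ X : F, a11*X^2 + a13*X + a33 = a11 * (X - x₁) * (X - x₂) := by
      intro X
      rw [hx₁, hx₂]
      have ht' : a13^2*t^2 + a13^2*t = a11*a33 := by
        field_simp at ht; linear_combination ht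
      field_simp
      linear_combination ht' + (a11*X*a13 + a11*X*a13*t)*h2F
        + (a11*a33 - a13^2*t - a13^2*t^2) * h2F
    have hroot : ∀ X : F, a11*X^2 + a13*X + a33 = 0 ↔ (X = x₁ ∨ X = x₂) := by
      intro X
      rw [hfac X, mul_eq_zero, mul_eq_zero, sub_eq_zero, sub_eq_zero]
      simp [h11]
    have hx1ne : x₁ ≠ 0 := by
      intro h0
      have := (hroot x₁).mpr (Or.inl rfl)
      rw [h0] at this
      apply h33; linear_combination this
    have hx2ne : x₂ ≠ 0 := by
      intro h0
      have := (hroot x₂).mpr (Or.inr rfl)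
      rw [h0] at this
      apply h33; linear_combination this
    have hSeq : ({p : F × F | ∃ x a : F, x ≠ 0 ∧ Algebra.trace (ZMod 2) F a = 0 ∧
          p = (x, a * x ^ 2)} ∩ {p : F × F | a11 * p.1 ^ 2 + a13 * p.1 + a33 = 0})
        = (fun p : F × F => (p.1, p.2 * p.1^2)) ''
            ((({x₁, x₂} : Set F)) ×ˢ {a : F | Algebra.trace (ZMod 2) F a = 0}) := by
      ext p
      simp only [Set.mem_inter_iff, Set.mem_setOf_eq, Set.mem_image, Set.mem_prod,
        Set.mem_insert_iff, Set.mem_singleton_iff, Prod.exists]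
      constructor
      · rintro ⟨⟨x, a, hxne, hta, rfl⟩, hq⟩
        exact ⟨x, a, ⟨(hroot x).mp hq, hta⟩, rfl⟩
      · rintro ⟨x, a, ⟨hx, hta⟩, rfl⟩
        have hxne : x ≠ 0 := by rcases hx with rfl | rfl <;> assumption
        exact ⟨⟨x, a, hxne, hta, rfl⟩, (hroot x).mpr hx⟩
    rw [hSeq]
    have hinj : Set.InjOn (fun p : F × F => (p.1, p.2 * p.1^2))
        ((({x₁, x₂} : Set F)) ×ˢ {a : F | Algebra.trace (ZMod 2) F a = 0}) := by
      rintro ⟨x, a⟩ ⟨hx, -⟩ ⟨y, b⟩ ⟨hy, -⟩ hEq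
      simp only [Prod.mk.injEq] at hEq
      obtain ⟨rfl, hab⟩ := hEq
      have hxne : x ≠ 0 := by rcases hx with rfl | rfl <;> assumption
      have : a = b := by
        have := mul_right_cancel₀ (pow_ne_zero 2 hxne) hab
        exact this
      simp [this]
    rw [Set.ncard_image_of_injOn hinj]
    have hprod : ((({x₁, x₂} : Set F)) ×ˢ {a : F | Algebra.trace (ZMod 2) F a = 0}).ncard
        = 2 * 2 ^ (h - 1) := by
      rw [← Nat.card_coe_set_eq,
        Nat.card_congr (Equiv.Set.prod _ _), Nat.card_prod,
        Nat.card_coe_set_eq, Set.ncard_pair hx12, aux_ker_card (by omega) hcard]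
    rw [hprod, ← pow_succ']
    congr 1; omega
  · -- trace one case
    intro hc1
    convert Set.ncard_empty (F × F)
    ext p
    simp only [Set.mem_inter_iff, Set.mem_setOf_eq, Set.mem_empty_iff_false, iff_false,
      not_and]
    rintro ⟨x, a, hxne, hta, rfl⟩ hq
    have hq' : a11 * x ^ 2 + a13 * x + a33 = 0 := by simpa using hq
    set t := a11 * x / a13 with htdef
    have ht : t^2 + t = a11 * a33 / a13 ^ 2 := by
      rw [htdef]
      field_simp
      linear_combination hq' - a33*h2F
    have : Algebra.trace (ZMod 2) F (a11 * a33 / a13 ^ 2) = 0 := by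
      rw [← ht, map_add, aux_tr_sq]
      exact CharTwo.add_self_eq_zero _
    rw [this] at hc1
    exact one_ne_zero hc1.symm
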